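/- Let n ≥ 2 be an integer, R > 0, and let φ : [R,∞) → ℝ be a solution of φ'(r) = (1+φ(r)²)(1 − (n−1)φ(r)/r). Then at every r where φ(r) > r/(n−1) one has φ'(r) < 0, and there exists r̃ ≥ R such that φ(r) < r/(n−1) (and hence φ'(r) > 0) for all r > r̃. -/

import Mathlib

noncomputable section
open Set Filter Topology

theorem translator_ode_sign {n : ℕ} (hn : 2 ≤ n) (R : ℝ) (hR : 0 < R)
    (φ : ℝ → ℝ)
    (hφ : ∀ r ∈ Ici R,
      HasDerivWithinAt φ ((1 + φ r ^ 2) * (1 - ((n : ℝ) - 1) * φ r / r)) (Ici R) r) :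
    (∀ r ∈ Ici R, r / ((n : ℝ) - 1) < φ r → derivWithin φ (Ici R) r < 0) ∧
    ∃ rt ≥ R, ∀ r > rt, φ r < r / ((n : ℝ) - 1) ∧ 0 < derivWithin φ (Ici R) r := by
  have hn2 : (2:ℝ) ≤ (n:ℝ) := by exact_mod_cast hn
  set c : ℝ := (n:ℝ) - 1 with hcdef
  have hc : (1:ℝ) ≤ c := by simp only [hcdef]; linarith
  have hc0 : (0:ℝ) < c := by linarith
  have hderiv : ∀ r ∈ Ici R, derivWithin φ (Ici R) r
      = (1 + φ r ^ 2) * (1 - c * φ r / r) :=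
    fun r hr => (hφ r hr).derivWithin (uniqueDiffOn_Ici R r hr)
  have hrpos : ∀ r ∈ Ici R, (0:ℝ) < r := fun r hr => lt_of_lt_of_le hR hr
  -- sign lemmas
  have hneg : ∀ r ∈ Ici R, r / c < φ r → derivWithin φ (Ici R) r < 0 := by
    intro r hr h
    rw [hderiv r hr]
    have hr0 := hrpos r hr
    have h1 : r < φ r * c := (div_lt_iff₀ hc0).mp h
    have h2 : 1 < c * φ r / r := (one_lt_div hr0).mpr (by linarith)
    have h3 : (0:ℝ) < 1 + φ r ^ 2 := by positivity
    exact mul_neg_of_pos_of_neg h3 (by linarith)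
  have hpos : ∀ r ∈ Ici R, φ r < r / c → 0 < derivWithin φ (Ici R) r := by
    intro r hr h
    rw [hderiv r hr]
    have hr0 := hrpos r hr
    have h1 : φ r * c < r := (lt_div_iff₀ hc0).mp h
    have h2 : c * φ r / r < 1 := (div_lt_one hr0).mpr (by linarith)
    have h3 : (0:ℝ) < 1 + φ r ^ 2 := by positivity
    exact mul_pos h3 (by linarith)
  have hcont : ContinuousOn φ (Ici R) := fun r hr => (hφ r hr).continuousWithinAt
  -- there is a point strictly below the line
  have hex : ∃ s, R ≤ s ∧ φ s < s / c := by
    by_contra hcon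
    push_neg at hcon
    -- φ is antitone on Ici R
    have hanti : AntitoneOn φ (Ici R) := by
      apply antitoneOn_of_hasDerivWithinAt_nonpos (convex_Ici R) hcont
        (f' := fun x => (1 + φ x ^ 2) * (1 - c * φ x / x))
      · intro x hx
        rw [interior_Ici] at hx
        exact (hφ x (mem_Ici.mpr (le_of_lt (mem_Ioi.mp hx)))).mono interior_subset
      · intro x hx
        rw [interior_Ici] at hx
        have hx' : x ∈ Ici R := mem_Ici.mpr (le_of_lt (mem_Ioi.mp hx))
        have hx0 := hrpos x hx'
        have h1 : x ≤ φ x * c := (div_le_iff₀ hc0).mp (hcon x hx')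
        have h2 : 1 ≤ c * φ x / x := (one_le_div hx0).mpr (by linarith)
        have h3 : (0:ℝ) < 1 + φ x ^ 2 := by positivity
        exact mul_nonpos_of_nonneg_of_nonpos h3.le (by linarith)
    set r0 : ℝ := max R (c * φ R) + c with hr0def
    have hr0R : R ≤ r0 := le_trans (le_max_left _ _) (by simp only [hr0def]; linarith)
    have h1 : c * φ R + c ≤ r0 := by
      have := le_max_right R (c * φ R); simp only [hr0def]; linarith
    have h2 : r0 / c ≤ φ R := le_trans (hcon r0 hr0R)
      (hanti (self_mem_Ici) hr0R hr0R)
    have h3 : r0 ≤ φ R * c := (div_le_iff₀ hc0).mp h2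
    nlinarith
  obtain ⟨s, hsR, hs⟩ := hex
  -- invariance: stays strictly below the line forever
  have key : ∀ r, s ≤ r → φ r < r / c := by
    by_contra hcon
    push_neg at hcon
    obtain ⟨r1, hr1s, hr1⟩ := hcon
    set g : ℝ → ℝ := fun r => r / c - φ r with hgdef
    have hgcont : ContinuousOn g (Ici R) :=
      (continuousOn_id.div_const c).sub hcont
    set A : Set ℝ := {r | s ≤ r ∧ r / c ≤ φ r} with hAdef
    have hAsub : A ⊆ Ici R := fun x hx => le_trans hsR hx.1
    have hAne : A.Nonempty := ⟨r1, hr1s, hr1⟩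
    have hAbdd : BddBelow A := ⟨s, fun x hx => hx.1⟩
    have hAclosed : IsClosed A := by
      have : A = Ici s ∩ (Ici R ∩ g ⁻¹' (Iic 0)) := by
        ext x
        simp only [hAdef, mem_setOf_eq, mem_inter_iff, mem_Ici, mem_preimage, mem_Iic, hgdef]
        constructor
        · intro ⟨h1, h2⟩; exact ⟨h1, le_trans hsR h1, by linarith⟩
        · intro ⟨h1, _, h3⟩; exact ⟨h1, by linarith⟩
      rw [this]
      exact isClosed_Ici.inter (hgcont.preimage_isClosed_of_isClosed isClosed_Ici isClosed_Iic)
    set t : ℝ := sInf A with htdef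
    have htA : t ∈ A := hAclosed.csInf_mem hAne hAbdd
    have hts : s < t := by
      rcases lt_or_eq_of_le htA.1 with h | h
      · exact h
      · exfalso; rw [← h] at htA; exact absurd htA.2 (not_le.mpr hs)
    have htR : t ∈ Ici R := hAsub htA
    have hgt_pos : ∀ r, s ≤ r → r < t → 0 < g r := by
      intro r hsr hrt
      by_contra hgr
      push_neg at hgr
      have : r ∈ A := ⟨hsr, by simp only [hgdef] at hgr; linarith⟩
      exact absurd (csInf_le hAbdd this) (not_le.mpr hrt)
    have hIooR : Ioo s t ⊆ Ici R := fun x hx => le_trans hsR hx.1.le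
    have hne : (𝓝[Ioo s t] t).NeBot := by
      rw [← mem_closure_iff_nhdsWithin_neBot, closure_Ioo (ne_of_lt hts)]
      exact ⟨hts.le, le_refl t⟩
    -- g t = 0
    have hgt0 : φ t = t / c := by
      have hle : t / c ≤ φ t := htA.2
      have htend : Tendsto g (𝓝[Ioo s t] t) (𝓝 (g t)) :=
        ((hgcont t htR).mono hIooR).tendsto
      have hge : 0 ≤ g t := ge_of_tendsto htend
        (eventually_nhdsWithin_of_forall fun r hr => (hgt_pos r hr.1.le hr.2).le)
      simp only [hgdef] at hge
      linarith
    have ht0 : (0:ℝ) < t := hrpos t htR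
    -- derivative of φ at t is 0
    have hφ't : HasDerivWithinAt φ 0 (Ici R) t := by
      have := hφ t htR
      have heq : (1 + φ t ^ 2) * (1 - c * φ t / t) = 0 := by
        rw [hgt0]
        field_simp
        ring
      rwa [heq] at this
    have hg't : HasDerivWithinAt g (1 / c) (Ici R) t := by
      have := ((hasDerivWithinAt_id t (Ici R)).div_const c).sub hφ't
      rw [sub_zero] at this; exact this
    rw [hasDerivWithinAt_iff_tendsto_slope] at hg't
    have hsub : Ioo s t ⊆ Ici R \ {t} := fun x hx =>
      ⟨hIooR hx, by simp [ne_of_lt hx.2]⟩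
    have hslope : Tendsto (slope g t) (𝓝[Ioo s t] t) (𝓝 (1 / c)) :=
      hg't.mono_left (nhdsWithin_mono t hsub)
    have hev : ∀ᶠ r in 𝓝[Ioo s t] t, 0 < slope g t r :=
      hslope.eventually (eventually_gt_nhds (by positivity))
    obtain ⟨r, hrslope, hrIoo⟩ :=
      (hev.and (eventually_mem_nhdsWithin)).exists
    have hgr : 0 < g r := hgt_pos r hrIoo.1.le hrIoo.2
    have hgt : g t = 0 := by simp only [hgdef]; rw [hgt0]; ring
    have : slope g t r < 0 := by
      rw [slope_def_field, hgt, sub_zero]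
      exact div_neg_of_pos_of_neg hgr (by linarith [hrIoo.2])
    linarith
  refine ⟨hneg, s, hsR, fun r hr => ?_⟩
  have h1 := key r hr.le
  exact ⟨h1, hpos r (le_trans hsR hr.le) h1⟩
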